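/- Let μ be a probability measure on a measurable space Ω, let T, A, C be measurable subsets of Ω with μ(A) > 0 and μ(C) > 0, let γ be a countable type whose singletons are measurable, let W : Ω → γ be measurable, and let ε ≥ 0 be real. Assume: (i) for every w ∈ γ, μ[{W = w} | A] = μ[{W = w} | C]; and (ii) for every w ∈ γ with μ(A ∩ {W = w}) > 0 and μ(C ∩ {W = w}) > 0, one has exp(−ε)·μ[T | C ∩ {W = w}] ≤ μ[T | A ∩ {W = w}] ≤ exp(ε)·μ[T | C ∩ {W = w}]. Then exp(−ε)·μ[T | C] ≤ μ[T | A] ≤ exp(ε)·μ[T | C]. -/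
import Mathlib


open MeasureTheory

/-- Conditional probability `μ[A | B] = μ(A ∩ B) / μ(B)` as a real number. -/
noncomputable def condP {Ω : Type*} [MeasurableSpace Ω] (μ : Measure Ω) (A B : Set Ω) : ℝ :=
  (μ (A ∩ B)).toReal / (μ B).toReal

theorem stmt_0 {Ω γ : Type*} [MeasurableSpace Ω] [MeasurableSpace γ] [Countable γ]
    [MeasurableSingletonClass γ]
    (μ : Measure Ω) [IsProbabilityMeasure μ]
    (T A C : Set Ω) (hT : MeasurableSet T) (hA : MeasurableSet A) (hC : MeasurableSet C)
    (hA0 : 0 < (μ A).toReal) (hC0 : 0 < (μ C).toReal)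
    (W : Ω → γ) (hW : Measurable W) (ε : ℝ) (hε : 0 ≤ ε)
    (h1 : ∀ w : γ, condP μ {ω | W ω = w} A = condP μ {ω | W ω = w} C)
    (h2 : ∀ w : γ, 0 < (μ (A ∩ {ω | W ω = w})).toReal →
      0 < (μ (C ∩ {ω | W ω = w})).toReal →
      Real.exp (-ε) * condP μ T (C ∩ {ω | W ω = w}) ≤ condP μ T (A ∩ {ω | W ω = w}) ∧
      condP μ T (A ∩ {ω | W ω = w}) ≤ Real.exp ε * condP μ T (C ∩ {ω | W ω = w})) :
    Real.exp (-ε) * condP μ T C ≤ condP μ T A ∧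
    condP μ T A ≤ Real.exp ε * condP μ T C := by
  classical
  have hWm : ∀ w : γ, MeasurableSet {ω | W ω = w} := fun w => hW (measurableSet_singleton w)
  have key : ∀ S : Set Ω, MeasurableSet S → μ S = ∑' w : γ, μ (S ∩ {ω | W ω = w}) := by
    intro S hS
    have hU : S = ⋃ w : γ, S ∩ {ω | W ω = w} := by
      ext ω; simp
    have hd : Pairwise (Function.onFun Disjoint fun w : γ => S ∩ {ω | W ω = w}) := by
      intro i j hij
      exact Set.disjoint_left.2 (by rintro ω ⟨-, h1'⟩ ⟨-, h2'⟩; exact hij (h1'.symm.trans h2'))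
    conv_lhs => rw [hU]
    exact measure_iUnion hd fun w => hS.inter (hWm w)
  have keyR : ∀ S : Set Ω, MeasurableSet S →
      (μ S).toReal = ∑' w : γ, (μ (S ∩ {ω | W ω = w})).toReal := by
    intro S hS
    rw [key S hS, ENNReal.tsum_toReal_eq (fun w => measure_ne_top _ _)]
  have summ : ∀ S : Set Ω, MeasurableSet S →
      Summable (fun w : γ => (μ (S ∩ {ω | W ω = w})).toReal) := by
    intro S hS
    apply ENNReal.summable_toReal
    rw [← key S hS]; exact measure_ne_top _ _
  -- per-term inequalities
  have hterm : ∀ w : γ,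
      Real.exp (-ε) * ((μ (T ∩ (C ∩ {ω | W ω = w}))).toReal / (μ C).toReal)
        ≤ (μ (T ∩ (A ∩ {ω | W ω = w}))).toReal / (μ A).toReal ∧
      (μ (T ∩ (A ∩ {ω | W ω = w}))).toReal / (μ A).toReal
        ≤ Real.exp ε * ((μ (T ∩ (C ∩ {ω | W ω = w}))).toReal / (μ C).toReal) := by
    intro w
    set aw := (μ (A ∩ {ω | W ω = w})).toReal with haw
    set cw := (μ (C ∩ {ω | W ω = w})).toReal with hcw
    have hratio : aw / (μ A).toReal = cw / (μ C).toReal := by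
      have := h1 w
      simpa [condP, haw, hcw, Set.inter_comm] using this
    by_cases ha : aw = 0
    · have hc : cw = 0 := by
        have h0 : cw / (μ C).toReal = 0 := by rw [← hratio, ha, zero_div]
        exact (div_eq_zero_iff.mp h0).resolve_right hC0.ne'
      have hA0' : μ (A ∩ {ω | W ω = w}) = 0 :=
        ((ENNReal.toReal_eq_zero_iff _).mp ha).resolve_right (measure_ne_top _ _)
      have hC0' : μ (C ∩ {ω | W ω = w}) = 0 :=
        ((ENNReal.toReal_eq_zero_iff _).mp hc).resolve_right (measure_ne_top _ _)
      have hTA0 : μ (T ∩ (A ∩ {ω | W ω = w})) = 0 :=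
        measure_mono_null Set.inter_subset_right hA0'
      have hTC0 : μ (T ∩ (C ∩ {ω | W ω = w})) = 0 :=
        measure_mono_null Set.inter_subset_right hC0'
      simp [hTA0, hTC0]
    · have hapos : 0 < aw := lt_of_le_of_ne ENNReal.toReal_nonneg (Ne.symm ha)
      have hcpos : 0 < cw := by
        have h0 : 0 < cw / (μ C).toReal := by
          rw [← hratio]; positivity
        by_contra hle
        push_neg at hle
        have : cw = 0 := le_antisymm hle ENNReal.toReal_nonneg
        rw [this, zero_div] at h0; exact lt_irrefl 0 h0
      obtain ⟨hl, hr⟩ := h2 w hapos hcpos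
      have hcondA : condP μ T (A ∩ {ω | W ω = w})
          = (μ (T ∩ (A ∩ {ω | W ω = w}))).toReal / aw := rfl
      have hcondC : condP μ T (C ∩ {ω | W ω = w})
          = (μ (T ∩ (C ∩ {ω | W ω = w}))).toReal / cw := rfl
      have hAeq : (μ (T ∩ (A ∩ {ω | W ω = w}))).toReal / (μ A).toReal
          = condP μ T (A ∩ {ω | W ω = w}) * (cw / (μ C).toReal) := by
        rw [hcondA, ← hratio]
        field_simp
      have hCeq : (μ (T ∩ (C ∩ {ω | W ω = w}))).toReal / (μ C).toReal
          = condP μ T (C ∩ {ω | W ω = w}) * (cw / (μ C).toReal) := by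
        rw [hcondC]
        field_simp
      have hnn : 0 ≤ cw / (μ C).toReal := by positivity
      constructor
      · rw [hAeq, hCeq, ← mul_assoc]
        exact mul_le_mul_of_nonneg_right hl hnn
      · rw [hAeq, hCeq, ← mul_assoc]
        exact mul_le_mul_of_nonneg_right hr hnn
  -- decomposition of the two conditional probabilities
  have hTA : condP μ T A
      = ∑' w : γ, (μ (T ∩ (A ∩ {ω | W ω = w}))).toReal / (μ A).toReal := by
    rw [condP, keyR (T ∩ A) (hT.inter hA), tsum_div_const]
    simp [Set.inter_assoc]
  have hTC : condP μ T C
      = ∑' w : γ, (μ (T ∩ (C ∩ {ω | W ω = w}))).toReal / (μ C).toReal := by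
    rw [condP, keyR (T ∩ C) (hT.inter hC), tsum_div_const]
    simp [Set.inter_assoc]
  have sA : Summable (fun w : γ => (μ (T ∩ (A ∩ {ω | W ω = w}))).toReal / (μ A).toReal) := by
    have := (summ (T ∩ A) (hT.inter hA)).div_const (μ A).toReal
    simpa [Set.inter_assoc] using this
  have sC : Summable (fun w : γ => (μ (T ∩ (C ∩ {ω | W ω = w}))).toReal / (μ C).toReal) := by
    have := (summ (T ∩ C) (hT.inter hC)).div_const (μ C).toReal
    simpa [Set.inter_assoc] using this
  constructor
  · rw [hTA, hTC, ← tsum_mul_left]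
    exact Summable.tsum_le_tsum (fun w => (hterm w).1) (sC.mul_left _) sA
  · rw [hTA, hTC, ← tsum_mul_left]
    exact Summable.tsum_le_tsum (fun w => (hterm w).2) sA (sC.mul_left _)
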